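/- Let N, n, L, m be positive integers with n ≤ N and such that Lm/N is an integer, and let A_1, …, A_m ⊆ [N] := {1,…,N} be subsets of size L such that every element of [N] belongs to exactly Lm/N of the sets A_i. Let M_n be the set of computational basis states of N qubits having exactly n qubits in state |1⟩. Then for every unit vector |ξ⟩ in the span of M_n, the averaged entanglement entropy satisfies (1/m) Σ_{i=1}^m S(ξ_{A_i}) ≤ H_b(n/N)·L, where ξ_{A_i} is the reduced density matrix of |ξ⟩⟨ξ| on the qubits in A_i. -/

import Mathlib

open MeasureTheory ProbabilityTheory Matrix Finset
open scoped Matrix ComplexOrder Classical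

set_option maxHeartbeats 1000000

noncomputable section

/-- The Hilbert space basis of `N` qubits is indexed by `Fin N → Bool`. -/
abbrev QOp (N : ℕ) := Matrix (Fin N → Bool) (Fin N → Bool) ℂ

/-- Jordan–Wigner annihilation operator `a_j = Z^{⊗(j-1)} ⊗ |0⟩⟨1| ⊗ I`. -/
def aOp (N : ℕ) (j : Fin N) : QOp N := fun x y =>
  if x j = false ∧ y j = true ∧ ∀ i, i ≠ j → x i = y i then
    ∏ i ∈ Finset.univ.filter (fun i => i < j), (if y i then (-1 : ℂ) else 1)
  else 0

/-- The vacuum state `|0…0⟩`. -/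
def vac (N : ℕ) : (Fin N → Bool) → ℂ := fun x => if x = fun _ => false then 1 else 0

/-- `|φ_n⟩ = a_1† a_2† ⋯ a_n† |0⟩`. -/
def phiState (N n : ℕ) : (Fin N → Bool) → ℂ :=
  ((((List.finRange N).filter (fun j => decide (j.val < n))).map
    (fun j => (aOp N j)ᴴ)).prod) *ᵥ vac N

/-- Rank-one projector `|v⟩⟨v|`. -/
def outer (N : ℕ) (v : (Fin N → Bool) → ℂ) : QOp N := Matrix.vecMulVec v (star v)

/-- `H_SYK2 = Σ_{j,k} h_{jk} a_j† a_k`. -/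
def HSYK2 (N : ℕ) (h : Matrix (Fin N) (Fin N) ℂ) : QOp N :=
  ∑ j, ∑ k, h j k • ((aOp N j)ᴴ * aOp N k)

instance matrixMeasurableSpace {m n α : Type*} [MeasurableSpace α] :
    MeasurableSpace (Matrix m n α) := MeasurableSpace.pi

/-- The GUE measure on `N × N` complex matrices. -/
def gueMeasure (N : ℕ) : Measure (Matrix (Fin N) (Fin N) ℂ) :=
  Measure.map
    (fun p : (Fin N → ℝ) × (Fin N → Fin N → ℝ) × (Fin N → Fin N → ℝ) =>
      Matrix.of fun j k =>
        if j = k then (p.1 j : ℂ)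
        else if j < k then (p.2.1 j k : ℂ) + (p.2.2 j k : ℂ) * Complex.I
        else (p.2.1 k j : ℂ) - (p.2.2 k j : ℂ) * Complex.I)
    ((Measure.pi fun _ => gaussianReal 0 1).prod
      ((Measure.pi fun _ => Measure.pi fun _ => gaussianReal 0 (1/2)).prod
        (Measure.pi fun _ => Measure.pi fun _ => gaussianReal 0 (1/2))))

/-- Von Neumann entropy `S(ρ) = -tr(ρ ln ρ)` via eigenvalues (0 for non-Hermitian junk). -/
def vnEntropy {m : Type*} [Fintype m] [DecidableEq m] (ρ : Matrix m m ℂ) : ℝ :=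
  if hρ : ρ.IsHermitian then -∑ i, hρ.eigenvalues i * Real.log (hρ.eigenvalues i) else 0

/-- Rényi-2 entropy `S₂(ρ) = -ln tr(ρ²)`. -/
def renyi2 {m : Type*} [Fintype m] (ρ : Matrix m m ℂ) : ℝ := -Real.log ((ρ * ρ).trace.re)

/-- Rényi-α entropy. -/
def renyiEntropy {m : Type*} [Fintype m] [DecidableEq m] (α : ℝ) (ρ : Matrix m m ℂ) : ℝ :=
  if hρ : ρ.IsHermitian then
    if α = 1 then -∑ i, hρ.eigenvalues i * Real.log (hρ.eigenvalues i)
    else (1 - α)⁻¹ * Real.log (∑ i, hρ.eigenvalues i ^ α)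
  else 0

/-- Binary entropy function. -/
def binEntropy (x : ℝ) : ℝ := -x * Real.log x - (1 - x) * Real.log (1 - x)

/-- All eigenvalues (roots of the characteristic polynomial, with multiplicity) are distinct. -/
def NondegSpectrum {m : Type*} [Fintype m] [DecidableEq m] (M : Matrix m m ℂ) : Prop :=
  M.charpoly.roots.Nodup

/-- The spectrum has non-degenerate gaps. -/
def NondegGaps {m : Type*} [Fintype m] [DecidableEq m] (M : Matrix m m ℂ) : Prop :=
  M.charpoly.roots.Nodup ∧
  ∀ a ∈ M.charpoly.roots, ∀ b ∈ M.charpoly.roots, ∀ c ∈ M.charpoly.roots,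
    ∀ d ∈ M.charpoly.roots, a ≠ b → c ≠ d → a - b = c - d → a = c ∧ b = d

/-- The Jordan–Wigner image on modes `A` of the matrix unit `|y⟩⟨x|` of an `L`-mode system:
`(∏_{k : y_k = 1, increasing} a_{i_k}†) (∏_k a_{i_k} a_{i_k}†) (∏_{k : x_k = 1, decreasing} a_{i_k})`
where `i_1 < ⋯ < i_L` enumerates `A`. -/
def hatUnit (N L : ℕ) (ι : Fin L → Fin N) (y x : Fin L → Bool) : QOp N :=
  ((((List.finRange L).filter (fun k => y k)).map (fun k => (aOp N (ι k))ᴴ)).prod) *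
  (((List.finRange L).map (fun k => aOp N (ι k) * (aOp N (ι k))ᴴ)).prod) *
  (((((List.finRange L).filter (fun k => x k)).map (fun k => aOp N (ι k))).reverse).prod)

/-- The fermionic reduced density matrix of `ρ` on the set `A` of `L` modes, i.e. the unique
`2^L × 2^L` matrix with `tr(ρ_A X) = tr(ρ X̂)` for all polynomials `X` in the `L`-mode
creation/annihilation operators, `X̂` being the corresponding polynomial in `{a_j, a_j†}_{j ∈ A}`
(modes taken in increasing order). -/
def fermRDM (N L : ℕ) (A : Finset (Fin N)) (hA : A.card = L) (ρ : QOp N) :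
    Matrix (Fin L → Bool) (Fin L → Bool) ℂ :=
  fun x y => (ρ * hatUnit N L (fun k => A.orderEmbOfFin hA k) y x).trace

/-- Time evolution `e^{-iHt} v`. -/
def evolve (N : ℕ) (H : QOp N) (t : ℝ) (v : (Fin N → Bool) → ℂ) : (Fin N → Bool) → ℂ :=
  NormedSpace.exp ((-(t : ℂ) * Complex.I) • H) *ᵥ v

/-- Qubit partial trace onto the qubits in `A`. -/
def ptrace {N : ℕ} (A : Finset (Fin N)) (ρ : QOp N) :
    Matrix ({i // i ∈ A} → Bool) ({i // i ∈ A} → Bool) ℂ :=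
  fun x y => ∑ z : {i : Fin N // i ∉ A} → Bool,
    ρ (fun i => if h : i ∈ A then x ⟨i, h⟩ else z ⟨i, h⟩)
      (fun i => if h : i ∈ A then y ⟨i, h⟩ else z ⟨i, h⟩)



/-! ### Auxiliary lemmas -/

lemma vnEntropy_le_sum_negMulLog_diag {m : Type*} [Fintype m] [DecidableEq m]
    {ρ : Matrix m m ℂ} (hρ : ρ.PosSemidef) :
    vnEntropy ρ ≤ ∑ x, Real.negMulLog (ρ x x).re := by
  have hH := hρ.1
  set U : Matrix m m ℂ := (Matrix.IsHermitian.eigenvectorUnitary hH : Matrix m m ℂ) with hU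
  set lam := hH.eigenvalues with hlam
  set w : m → m → ℝ := fun x j => Complex.normSq (U x j) with hw
  have hdiag : ∀ x, (ρ x x).re = ∑ j, w x j * lam j := by
    intro x
    have hentry : ρ x x = ∑ j, U x j * (lam j : ℂ) * (starRingEnd ℂ) (U x j) := by
      conv_lhs => rw [hH.spectral_theorem]
      simp [Matrix.mul_apply, Matrix.diagonal_apply, Finset.sum_mul, Matrix.star_apply,
        Function.comp, Matrix.IsHermitian.eigenvectorUnitary_apply]
      exact Finset.sum_congr rfl fun j _ => by
        simp [hU, hlam, Matrix.IsHermitian.eigenvectorUnitary_apply]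
    rw [hentry, Complex.re_sum]
    refine Finset.sum_congr rfl fun j _ => ?_
    have : U x j * (lam j : ℂ) * (starRingEnd ℂ) (U x j)
        = (Complex.normSq (U x j) * lam j : ℝ) := by
      push_cast
      rw [← Complex.mul_conj]
      ring
    rw [this, Complex.ofReal_re]
  have hrow : ∀ x, ∑ j, w x j = 1 := by
    intro x
    have h1 : U * star U = 1 := (Matrix.mem_unitaryGroup_iff).mp
      (Matrix.IsHermitian.eigenvectorUnitary hH).2
    have hxx : (U * star U) x x = 1 := by rw [h1]; simp
    rw [Matrix.mul_apply] at hxx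
    have : ((∑ j, U x j * star U j x : ℂ)).re = 1 := by rw [hxx]; simp
    rw [Complex.re_sum] at this
    rw [← this]
    refine Finset.sum_congr rfl fun j _ => ?_
    simp [hw, Matrix.star_apply, ← Complex.mul_conj, Complex.normSq_apply]
  have hcol : ∀ j, ∑ x, w x j = 1 := by
    intro j
    have h1 : star U * U = 1 := (Matrix.mem_unitaryGroup_iff').mp
      (Matrix.IsHermitian.eigenvectorUnitary hH).2
    have hxx : (star U * U) j j = 1 := by rw [h1]; simp
    rw [Matrix.mul_apply] at hxx
    have h2 : ((∑ x, star U j x * U x j : ℂ)).re = 1 := by rw [hxx]; simp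
    rw [Complex.re_sum] at h2
    rw [← h2]
    refine Finset.sum_congr rfl fun x _ => ?_
    simp [hw, Matrix.star_apply, mul_comm, ← Complex.mul_conj, Complex.normSq_apply]
  have hwnn : ∀ x j, 0 ≤ w x j := fun x j => Complex.normSq_nonneg _
  have hlamnn : ∀ j, 0 ≤ lam j := fun j => hρ.eigenvalues_nonneg j
  have hjensen : ∀ x, ∑ j, w x j * Real.negMulLog (lam j) ≤ Real.negMulLog ((ρ x x).re) := by
    intro x
    rw [hdiag x]
    have := Real.concaveOn_negMulLog.le_map_sum (t := Finset.univ) (w := w x) (p := lam)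
      (fun j _ => hwnn x j) (hrow x) (fun j _ => hlamnn j)
    simpa [smul_eq_mul] using this
  have key : ∑ j, Real.negMulLog (lam j) ≤ ∑ x, Real.negMulLog ((ρ x x).re) := by
    calc ∑ j, Real.negMulLog (lam j)
        = ∑ j, (∑ x, w x j) * Real.negMulLog (lam j) := by
          refine Finset.sum_congr rfl fun j _ => by rw [hcol j, one_mul]
      _ = ∑ x, ∑ j, w x j * Real.negMulLog (lam j) := by
          rw [Finset.sum_comm]
          simp [Finset.sum_mul]
      _ ≤ ∑ x, Real.negMulLog ((ρ x x).re) := Finset.sum_le_sum fun x _ => hjensen x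
  rw [vnEntropy, dif_pos hH]
  calc -∑ j, hH.eigenvalues j * Real.log (hH.eigenvalues j)
      = ∑ j, Real.negMulLog (lam j) := by
        rw [← Finset.sum_neg_distrib]
        exact Finset.sum_congr rfl fun j _ => by rw [Real.negMulLog]; ring
    _ ≤ _ := key

lemma gibbs_pointwise {a b : ℝ} (ha : 0 ≤ a) (hb : 0 ≤ b) (h : 0 < a → 0 < b) :
    a - b ≤ a * Real.log a - a * Real.log b := by
  rcases eq_or_lt_of_le ha with h0 | hpos
  · rw [← h0]; simpa using hb
  · have hbpos := h hpos
    have hlog : Real.log (b / a) ≤ b / a - 1 := Real.log_le_sub_one_of_pos (by positivity)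
    rw [Real.log_div (ne_of_gt hbpos) (ne_of_gt hpos)] at hlog
    have := mul_le_mul_of_nonneg_left hlog (le_of_lt hpos)
    rw [mul_sub, mul_sub, mul_div_cancel₀ _ (ne_of_gt hpos), mul_one] at this
    linarith

lemma sum_negMulLog_le_cross {ι : Type*} [Fintype ι]
    (p q : ι → ℝ) (hp : ∀ y, 0 ≤ p y) (hq : ∀ y, 0 ≤ q y) (hpq : ∀ y, 0 < p y → 0 < q y)
    (hsp : ∑ y, p y = 1) (hsq : ∑ y, q y = 1) :
    ∑ y, Real.negMulLog (p y) ≤ -∑ y, p y * Real.log (q y) := by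
  have key : ∑ y, (p y - q y) ≤ ∑ y, (p y * Real.log (p y) - p y * Real.log (q y)) :=
    Finset.sum_le_sum fun y _ => gibbs_pointwise (hp y) (hq y) (hpq y)
  simp only [Finset.sum_sub_distrib, hsp, hsq, sub_self] at key
  simp only [Real.negMulLog, neg_mul, Finset.sum_neg_distrib]
  linarith

lemma shannon_subadditive {ι : Type*} [Fintype ι] [DecidableEq ι]
    (p : (ι → Bool) → ℝ) (hp : ∀ y, 0 ≤ p y) (hsum : ∑ y, p y = 1) :
    ∑ y, Real.negMulLog (p y) ≤
      ∑ j, ∑ b, Real.negMulLog (∑ y ∈ Finset.univ.filter (fun y => y j = b), p y) := by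
  set pj : ι → Bool → ℝ := fun j b => ∑ y ∈ Finset.univ.filter (fun y => y j = b), p y with hpj
  set q : (ι → Bool) → ℝ := fun y => ∏ j, pj j (y j) with hq
  have h0 : ∀ j b, 0 ≤ pj j b := fun j b => Finset.sum_nonneg fun y _ => hp y
  have hmarg : ∀ j, ∑ b, pj j b = 1 := by
    intro j
    exact (Finset.sum_fiberwise (Finset.univ : Finset (ι → Bool)) (fun y => y j) p).trans hsum
  have hqsum : ∑ y, q y = 1 := by
    have h := Finset.prod_univ_sum (t := fun _ : ι => (Finset.univ : Finset Bool))
      (f := fun j b => pj j b)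
    rw [Fintype.piFinset_univ] at h
    rw [hq, ← h]
    rw [Finset.prod_congr rfl (fun j (_ : j ∈ Finset.univ) => hmarg j), Finset.prod_const_one]
  have hple : ∀ (y : ι → Bool) (j : ι), p y ≤ pj j (y j) := by
    intro y j
    exact Finset.single_le_sum (f := p) (fun z _ => hp z) (by simp)
  have hpq : ∀ y, 0 < p y → 0 < q y := by
    intro y hy
    exact Finset.prod_pos fun j _ => lt_of_lt_of_le hy (hple y j)
  have hq0 : ∀ y, 0 ≤ q y := fun y => Finset.prod_nonneg fun j _ => h0 j (y j)
  have hcross : ∑ y, p y * Real.log (q y) = ∑ j, ∑ b, pj j b * Real.log (pj j b) := by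
    have step1 : ∑ y, p y * Real.log (q y) = ∑ y, ∑ j, p y * Real.log (pj j (y j)) := by
      refine Finset.sum_congr rfl fun y _ => ?_
      rcases eq_or_lt_of_le (hp y) with h0' | hpos
      · simp [← h0']
      · rw [hq, Real.log_prod (fun j _ => ne_of_gt (lt_of_lt_of_le hpos (hple y j))),
          Finset.mul_sum]
    rw [step1, Finset.sum_comm]
    refine Finset.sum_congr rfl fun j _ => ?_
    rw [← Finset.sum_fiberwise (Finset.univ : Finset (ι → Bool)) (fun y => y j)
      (fun y => p y * Real.log (pj j (y j)))]
    refine Finset.sum_congr rfl fun b _ => ?_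
    calc ∑ y ∈ Finset.univ.filter (fun y => y j = b), p y * Real.log (pj j (y j))
        = ∑ y ∈ Finset.univ.filter (fun y => y j = b), p y * Real.log (pj j b) := by
          refine Finset.sum_congr rfl fun y hy => ?_
          rw [(Finset.mem_filter.1 hy).2]
      _ = pj j b * Real.log (pj j b) := by rw [← Finset.sum_mul]
  have := sum_negMulLog_le_cross p q hp hq0 hpq hsum hqsum
  rw [hcross] at this
  calc ∑ y, Real.negMulLog (p y) ≤ -∑ j, ∑ b, pj j b * Real.log (pj j b) := this
    _ = ∑ j, ∑ b, Real.negMulLog (pj j b) := by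
        rw [← Finset.sum_neg_distrib]
        refine Finset.sum_congr rfl fun j' _ => ?_
        simp [Real.negMulLog]

lemma vecMulVec_star_posSemidef {n : Type*} [Fintype n] (v : n → ℂ) :
    (Matrix.vecMulVec v (star v)).PosSemidef := by
  refine Matrix.PosSemidef.of_dotProduct_mulVec_nonneg ?_ ?_
  · ext x y
    simp [Matrix.vecMulVec_apply, Matrix.conjTranspose_apply, Pi.star_apply, mul_comm]
  · intro w
    have h : star w ⬝ᵥ (Matrix.vecMulVec v (star v) *ᵥ w)
        = (∑ x, (starRingEnd ℂ) (w x) * v x) *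
          (starRingEnd ℂ) (∑ x, (starRingEnd ℂ) (w x) * v x) := by
      simp only [dotProduct, Matrix.mulVec, Matrix.vecMulVec_apply, Pi.star_apply, map_sum,
        _root_.map_mul, Complex.conj_conj, Finset.sum_mul, Finset.mul_sum, Complex.star_def]
      rw [Finset.sum_comm]
      refine Finset.sum_congr rfl fun x _ => Finset.sum_congr rfl fun y _ => by ring
    rw [h, Complex.mul_conj]
    exact_mod_cast Complex.normSq_nonneg _

def glue {N : ℕ} (A : Finset (Fin N)) (y : {i // i ∈ A} → Bool) (z : {i // i ∉ A} → Bool) :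
    Fin N → Bool := fun i => if h : i ∈ A then y ⟨i, h⟩ else z ⟨i, h⟩

lemma ptrace_outer_apply {N : ℕ} (A : Finset (Fin N)) (ξ : (Fin N → Bool) → ℂ)
    (x y : {i // i ∈ A} → Bool) :
    ptrace A (outer N ξ) x y
      = ∑ z, ξ (glue A x z) * (starRingEnd ℂ) (ξ (glue A y z)) := rfl

lemma ptrace_outer_eq_sum {N : ℕ} (A : Finset (Fin N)) (ξ : (Fin N → Bool) → ℂ) :
    ptrace A (outer N ξ) = ∑ z : {i : Fin N // i ∉ A} → Bool,
      Matrix.vecMulVec (fun x => ξ (glue A x z)) (star fun x => ξ (glue A x z)) := by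
  ext x y
  simp [ptrace_outer_apply, Matrix.sum_apply, Matrix.vecMulVec_apply, Complex.star_def]

lemma ptrace_outer_posSemidef {N : ℕ} (A : Finset (Fin N)) (ξ : (Fin N → Bool) → ℂ) :
    (ptrace A (outer N ξ)).PosSemidef := by
  rw [ptrace_outer_eq_sum]
  exact Finset.sum_induction _ _ (fun a b ha hb => ha.add hb) Matrix.PosSemidef.zero
    (fun z _ => vecMulVec_star_posSemidef _)

lemma ptrace_outer_diag_re {N : ℕ} (A : Finset (Fin N)) (ξ : (Fin N → Bool) → ℂ)
    (y : {i // i ∈ A} → Bool) :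
    ((ptrace A (outer N ξ)) y y).re = ∑ z, Complex.normSq (ξ (glue A y z)) := by
  rw [ptrace_outer_apply, Complex.re_sum]
  exact Finset.sum_congr rfl fun z _ => by rw [Complex.mul_conj, Complex.ofReal_re]


/-- Averaged entanglement entropy upper bound `(1/m) Σ S(ξ_{A_i}) ≤ H_b(n/N) L`
for a unit vector supported on computational basis states with exactly `n` qubits up,
where each qubit belongs to exactly `Lm/N` of the size-`L` subsets `A_i`. -/
theorem averaged_entropy_upper_bound
    (N n L m : ℕ) (hN : 0 < N) (hn : n ≤ N) (hL : 0 < L) (hm : 0 < m)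
    (A : Fin m → Finset (Fin N)) (hA : ∀ i, (A i).card = L)
    (hcover : ∀ j : Fin N, (Finset.univ.filter fun i => j ∈ A i).card * N = L * m)
    (ξ : (Fin N → Bool) → ℂ)
    (hnorm : ∑ x, ‖ξ x‖ ^ 2 = 1)
    (hsupp : ∀ x : Fin N → Bool,
      (Finset.univ.filter fun i => x i = true).card ≠ n → ξ x = 0) :
    (1 / m : ℝ) * ∑ i, vnEntropy (ptrace (A i) (outer N ξ)) ≤
      binEntropy ((n : ℝ) / N) * L := by
  classical
  set P : (Fin N → Bool) → ℝ := fun x => Complex.normSq (ξ x) with hP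
  have hPnn : ∀ x, 0 ≤ P x := fun x => Complex.normSq_nonneg _
  have hPsum : ∑ x, P x = 1 := by
    rw [← hnorm]
    exact Finset.sum_congr rfl fun x _ => (Complex.sq_norm _).symm
  set Q : Fin N → Bool → ℝ := fun j b => ∑ x, if x j = b then P x else 0 with hQ
  have hQnn : ∀ j b, 0 ≤ Q j b := fun j b => Finset.sum_nonneg fun x _ => by
    by_cases h : x j = b <;> simp [h, hPnn x]
  have hQsum : ∀ j, Q j false + Q j true = 1 := by
    intro j
    rw [hQ]
    simp only
    rw [← Finset.sum_add_distrib, ← hPsum]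
    refine Finset.sum_congr rfl fun x _ => ?_
    cases hxj : x j <;> simp [hxj]
  have hQn : ∑ j, Q j true = n := by
    rw [hQ]
    simp only
    rw [Finset.sum_comm]
    have hx : ∀ x : Fin N → Bool, ∑ j, (if x j = true then P x else 0) = n * P x := by
      intro x
      rw [← Finset.sum_filter, Finset.sum_const, nsmul_eq_mul]
      by_cases hcard : (Finset.univ.filter fun j => x j = true).card = n
      · rw [hcard]
      · have hz : P x = 0 := by rw [hP]; simp [hsupp x hcard]
        rw [hz, mul_zero, mul_zero]
    rw [Finset.sum_congr rfl fun x _ => hx x, ← Finset.mul_sum, hPsum, mul_one]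
  -- per-subset bound
  have hmain : ∀ i, vnEntropy (ptrace (A i) (outer N ξ)) ≤
      ∑ j ∈ A i, (Real.negMulLog (Q j false) + Real.negMulLog (Q j true)) := by
    intro i
    set e := Equiv.piEquivPiSubtypeProd (fun j : Fin N => j ∈ A i) (fun _ => Bool) with he
    set pA : ({j // j ∈ A i} → Bool) → ℝ := fun y => ∑ z, P (glue (A i) y z) with hpA
    have hdiag : ∀ y, ((ptrace (A i) (outer N ξ)) y y).re = pA y :=
      fun y => ptrace_outer_diag_re (A i) ξ y
    have hpAnn : ∀ y, 0 ≤ pA y := fun y => Finset.sum_nonneg fun z _ => hPnn _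
    have hglue : ∀ y z, glue (A i) y z = e.symm (y, z) := fun y z => rfl
    have hpAsum : ∑ y, pA y = 1 := by
      rw [hpA]
      calc ∑ y, ∑ z, P (glue (A i) y z)
          = ∑ p : ({j // j ∈ A i} → Bool) × ({j : Fin N // j ∉ A i} → Bool), P (e.symm p) := by
            rw [Fintype.sum_prod_type]
            exact Finset.sum_congr rfl fun y _ => Finset.sum_congr rfl fun z _ => by
              rw [hglue]
        _ = ∑ x, P x := Equiv.sum_comp e.symm P
        _ = 1 := hPsum
    have hmarg : ∀ (j0 : {j // j ∈ A i}) (b : Bool),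
        ∑ y ∈ Finset.univ.filter (fun y => y j0 = b), pA y = Q j0.val b := by
      intro j0 b
      rw [Finset.sum_filter]
      calc ∑ y, (if y j0 = b then pA y else 0)
          = ∑ y, ∑ z, (if y j0 = b then P (glue (A i) y z) else 0) := by
            refine Finset.sum_congr rfl fun y _ => ?_
            by_cases h : y j0 = b <;> simp [h, hpA]
        _ = ∑ p : ({j // j ∈ A i} → Bool) × ({j : Fin N // j ∉ A i} → Bool),
              (if p.1 j0 = b then P (e.symm p) else 0) := by
            rw [Fintype.sum_prod_type]
            exact Finset.sum_congr rfl fun y _ => Finset.sum_congr rfl fun z _ => by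
              rw [hglue]
        _ = ∑ x, (if x j0.val = b then P x else 0) := by
            rw [← Equiv.sum_comp e (fun p => if p.1 j0 = b then P (e.symm p) else 0)]
            refine Finset.sum_congr rfl fun x _ => ?_
            have h1 : (e x).1 j0 = x j0.val := rfl
            rw [h1, Equiv.symm_apply_apply]
        _ = Q j0.val b := rfl
    calc vnEntropy (ptrace (A i) (outer N ξ))
        ≤ ∑ y, Real.negMulLog (((ptrace (A i) (outer N ξ)) y y).re) :=
          vnEntropy_le_sum_negMulLog_diag (ptrace_outer_posSemidef (A i) ξ)
      _ = ∑ y, Real.negMulLog (pA y) :=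
          Finset.sum_congr rfl fun y _ => by rw [hdiag]
      _ ≤ ∑ j0 : {j // j ∈ A i}, ∑ b, Real.negMulLog
            (∑ y ∈ Finset.univ.filter (fun y => y j0 = b), pA y) :=
          shannon_subadditive pA hpAnn hpAsum
      _ = ∑ j0 : {j // j ∈ A i}, ∑ b, Real.negMulLog (Q j0.val b) :=
          Finset.sum_congr rfl fun j0 _ => Finset.sum_congr rfl fun b _ => by rw [hmarg]
      _ = ∑ j ∈ A i, ∑ b, Real.negMulLog (Q j b) :=
          Finset.sum_coe_sort (A i) (fun j => ∑ b, Real.negMulLog (Q j b))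
      _ = ∑ j ∈ A i, (Real.negMulLog (Q j false) + Real.negMulLog (Q j true)) := by
          refine Finset.sum_congr rfl fun j _ => ?_
          rw [Fintype.sum_bool]
          exact add_comm _ _
  set f : Fin N → ℝ := fun j => Real.negMulLog (Q j false) + Real.negMulLog (Q j true) with hf
  have hNpos : (0:ℝ) < N := by exact_mod_cast hN
  have hmpos : (0:ℝ) < m := by exact_mod_cast hm
  have hswap : ∑ i, ∑ j ∈ A i, f j
      = ∑ j, ((Finset.univ.filter fun i => j ∈ A i).card : ℝ) * f j := by
    have h1 : ∀ i, ∑ j ∈ A i, f j = ∑ j, if j ∈ A i then f j else 0 := by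
      intro i
      rw [Finset.sum_ite_mem, Finset.univ_inter]
    rw [Finset.sum_congr rfl fun i _ => h1 i, Finset.sum_comm]
    refine Finset.sum_congr rfl fun j _ => ?_
    rw [← Finset.sum_filter, Finset.sum_const, nsmul_eq_mul]
  have hcard : ∀ j, ((Finset.univ.filter fun i => j ∈ A i).card : ℝ) = (L:ℝ) * m / N := by
    intro j
    have h := hcover j
    have h2 : ((Finset.univ.filter fun i => j ∈ A i).card : ℝ) * N = (L:ℝ) * m := by
      exact_mod_cast congrArg (Nat.cast (R := ℝ)) h
    rw [eq_div_iff (ne_of_gt hNpos)]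
    exact h2
  -- Jensen for the site probabilities
  set q : Fin N → ℝ := fun j => Q j true with hq
  have hq1 : ∀ j, Q j false = 1 - q j := fun j => by have := hQsum j; rw [hq]; linarith
  have hqnn : ∀ j, 0 ≤ q j := fun j => hQnn j true
  have hqle : ∀ j, q j ≤ 1 := fun j => by have := hQsum j; have := hQnn j false; rw [hq]; linarith
  have hwsum : ∑ _j : Fin N, (1/(N:ℝ)) = 1 := by
    rw [Finset.sum_const, nsmul_eq_mul]
    simp [Finset.card_univ]
    field_simp
  have hJ1 : ∑ j, (1/(N:ℝ)) * Real.negMulLog (q j) ≤ Real.negMulLog ((n:ℝ)/N) := by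
    have hjen := Real.concaveOn_negMulLog.le_map_sum (t := (Finset.univ : Finset (Fin N)))
      (w := fun _ => 1/(N:ℝ)) (p := q) (fun j _ => by positivity) hwsum
      (fun j _ => hqnn j)
    have hs : ∑ j, (1/(N:ℝ)) • q j = (n:ℝ)/N := by
      simp only [smul_eq_mul]
      rw [← Finset.mul_sum, hq]
      rw [hQn]
      ring
    rw [hs] at hjen
    simpa [smul_eq_mul] using hjen
  have hJ2 : ∑ j, (1/(N:ℝ)) * Real.negMulLog (1 - q j) ≤ Real.negMulLog (1 - (n:ℝ)/N) := by
    have hjen := Real.concaveOn_negMulLog.le_map_sum (t := (Finset.univ : Finset (Fin N)))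
      (w := fun _ => 1/(N:ℝ)) (p := fun j => 1 - q j) (fun j _ => by positivity) hwsum
      (fun j _ => by have := hqle j; simp; linarith)
    have hs : ∑ j, (1/(N:ℝ)) • (1 - q j) = 1 - (n:ℝ)/N := by
      simp only [smul_eq_mul, mul_sub, mul_one]
      rw [Finset.sum_sub_distrib, hwsum, ← Finset.mul_sum, hQn]
      ring
    rw [hs] at hjen
    simpa [smul_eq_mul] using hjen
  have hbE : binEntropy ((n:ℝ)/N)
      = Real.negMulLog ((n:ℝ)/N) + Real.negMulLog (1 - (n:ℝ)/N) := by
    rw [binEntropy, Real.negMulLog, Real.negMulLog]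
    ring
  have hfinal : ∑ j, f j ≤ N * binEntropy ((n:ℝ)/N) := by
    have h1 : ∑ j, f j = N * ∑ j, (1/(N:ℝ)) * f j := by
      rw [Finset.mul_sum]
      refine Finset.sum_congr rfl fun j _ => ?_
      field_simp
    rw [h1, hbE]
    have h2 : ∑ j, (1/(N:ℝ)) * f j
        = ∑ j, (1/(N:ℝ)) * Real.negMulLog (1 - q j) + ∑ j, (1/(N:ℝ)) * Real.negMulLog (q j) := by
      rw [← Finset.sum_add_distrib]
      refine Finset.sum_congr rfl fun j _ => ?_
      rw [hf]
      simp only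
      rw [hq1 j]
      ring
    rw [h2]
    have := add_le_add hJ2 hJ1
    nlinarith [this]
  calc (1 / m : ℝ) * ∑ i, vnEntropy (ptrace (A i) (outer N ξ))
      ≤ (1 / m : ℝ) * ∑ i, ∑ j ∈ A i, f j := by
        refine mul_le_mul_of_nonneg_left ?_ (by positivity)
        exact Finset.sum_le_sum fun i _ => hmain i
    _ = (1 / m : ℝ) * ∑ j, ((L:ℝ) * m / N) * f j := by
        rw [hswap]
        congr 1
        exact Finset.sum_congr rfl fun j _ => by rw [hcard j]
    _ = ((L:ℝ)/N) * ∑ j, f j := by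
        rw [← Finset.mul_sum]
        field_simp
    _ ≤ ((L:ℝ)/N) * (N * binEntropy ((n:ℝ)/N)) := by
        refine mul_le_mul_of_nonneg_left hfinal (by positivity)
    _ = binEntropy ((n : ℝ) / N) * L := by
        field_simp


end
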